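/- arXiv:2104.09637 — 3 statements merged into one kernel-verified Lean document; each statement's English description precedes it below -/
import Mathlib

section
/- Let H be an N×N Hermitian complex matrix with orthonormal eigenvectors φ_1,…,φ_N and corresponding real eigenvalues θ_1,…,θ_N, let ψ(0) = Σ_{j=1}^N a_j φ_j with a_1,…,a_N ∈ ℂ, and let ψ(t) = exp(−itH)ψ(0). Then for any vector ξ ∈ ℂ^N, the limit as T → ∞ of (1/T)∫_0^T |⟨ξ, ψ(t)⟩|² dt exists and equals Σ_{j,k : θ_j = θ_k} a_j a_k* ⟨ξ, φ_j⟩ ⟨φ_k, ξ⟩, where * denotes complex conjugation. -/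
open scoped Matrix
section ExpAux
attribute [local instance] Matrix.linftyOpNormedAddCommGroup Matrix.linftyOpNormedRing
  Matrix.linftyOpNormedAlgebra

lemma exp_mulVec_eig {N : ℕ} (A : Matrix (Fin N) (Fin N) ℂ) (v : Fin N → ℂ) (μ : ℂ)
    (h : A.mulVec v = μ • v) :
    (NormedSpace.exp A).mulVec v = Complex.exp μ • v := by
  have hpow : ∀ n : ℕ, (A ^ n).mulVec v = μ ^ n • v := by
    intro n; induction n with
    | zero => simp [Matrix.one_mulVec]
    | succ n ih =>
      rw [pow_succ, ← Matrix.mulVec_mulVec, h, Matrix.mulVec_smul, ih, smul_smul, pow_succ]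
      ring_nf
  let L : Matrix (Fin N) (Fin N) ℂ →ₗ[ℂ] (Fin N → ℂ) :=
    { toFun := fun M => M.mulVec v
      map_add' := fun M1 M2 => Matrix.add_mulVec M1 M2 v
      map_smul' := fun c M => Matrix.smul_mulVec c M v }
  have hs : Summable (fun n : ℕ => ((n.factorial : ℂ))⁻¹ • A ^ n) := NormedSpace.expSeries_summable' A
  have key : (NormedSpace.exp A).mulVec v
      = ∑' n : ℕ, ((n.factorial : ℂ))⁻¹ • (A ^ n).mulVec v := by
    rw [NormedSpace.exp_eq_tsum ℂ]
    have := (L.toContinuousLinearMap).map_tsum hs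
    simpa [L] using this
  rw [key]
  simp_rw [hpow, smul_smul]
  have hsum : Summable (fun n : ℕ => ((n.factorial : ℂ))⁻¹ * μ ^ n) := by
    simpa [smul_eq_mul] using NormedSpace.expSeries_summable' (𝕂 := ℂ) μ
  rw [hsum.tsum_smul_const]
  rw [Complex.exp_eq_exp_ℂ, NormedSpace.exp_eq_tsum ℂ]
  simp [smul_eq_mul]
end ExpAux

open scoped BigOperators

set_option maxHeartbeats 1000000 in
/-- Let `H` be an `N×N` Hermitian complex matrix with orthonormal
eigenvectors `φ 1, …, φ N` and corresponding real eigenvalues `θ 1, …, θ N`, let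
`ψ 0 = ∑ j, a j • φ j`, and let `ψ t = exp (-itH) (ψ 0)`.  Then for any vector `ξ ∈ ℂ^N`,
the limit as `T → ∞` of `(1/T) ∫_0^T |⟨ξ, ψ t⟩|² dt` exists and equals
`∑_{j,k : θ j = θ k} a j * (a k)* * ⟨ξ, φ j⟩ * ⟨φ k, ξ⟩`. -/

theorem stmt_0 (N : ℕ) (H : Matrix (Fin N) (Fin N) ℂ) (hH : H.IsHermitian)
    (φ : Fin N → (Fin N → ℂ)) (θ : Fin N → ℝ)
    (horth : ∀ j k : Fin N, (∑ i, star (φ j i) * φ k i) = if j = k then 1 else 0)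
    (heig : ∀ j : Fin N, H.mulVec (φ j) = (θ j : ℂ) • φ j)
    (a : Fin N → ℂ) (ψ : ℝ → (Fin N → ℂ))
    (hψ : ∀ t : ℝ,
      ψ t = (NormedSpace.exp ((-(Complex.I * t)) • H)).mulVec (∑ j, a j • φ j))
    (ξ : Fin N → ℂ) :
    Filter.Tendsto
      (fun T : ℝ =>
        (((1 / T) * ∫ t in (0:ℝ)..T, ‖∑ i, star (ξ i) * ψ t i‖ ^ 2 : ℝ) : ℂ))
      Filter.atTop
      (nhds (∑ j, ∑ k,
        if θ j = θ k then
          a j * star (a k) * (∑ i, star (ξ i) * φ j i) * (∑ i, star (φ k i) * ξ i)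
        else 0)) := by
  classical
  set c : Fin N → ℂ := fun j => ∑ i, star (ξ i) * φ j i with hc
  set b : Fin N → ℂ := fun j => a j * c j with hb
  -- ψ in terms of eigenbasis
  have hψf : ∀ t : ℝ, ψ t = ∑ j, (a j * Complex.exp (-(Complex.I * t) * θ j)) • φ j := by
    intro t
    rw [hψ t]
    have hsum : ∀ M : Matrix (Fin N) (Fin N) ℂ,
        M.mulVec (∑ j, a j • φ j) = ∑ j, a j • M.mulVec (φ j) := by
      intro M
      rw [← Matrix.mulVecLin_apply, map_sum]
      simp [Matrix.mulVecLin_apply]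
    rw [hsum]
    refine Finset.sum_congr rfl fun j _ => ?_
    have h1 : ((-(Complex.I * t)) • H).mulVec (φ j) = (-(Complex.I * t) * θ j) • φ j := by
      rw [Matrix.smul_mulVec, heig j, smul_smul]
    rw [exp_mulVec_eig _ _ _ h1, smul_smul, mul_comm]
  -- the inner product as a sum of exponentials
  have hf : ∀ t : ℝ, (∑ i, star (ξ i) * ψ t i)
      = ∑ j, b j * Complex.exp (-(Complex.I * t) * θ j) := by
    intro t
    rw [hψf t]
    simp only [Finset.sum_apply, Pi.smul_apply, smul_eq_mul, Finset.mul_sum]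
    rw [Finset.sum_comm]
    refine Finset.sum_congr rfl fun j _ => ?_
    show _ = (a j * c j) * _
    simp only [hc, Finset.mul_sum, Finset.sum_mul]
    exact Finset.sum_congr rfl fun i _ => by ring
  -- pointwise integrand identity
  have hpt : ∀ t : ℝ, ((‖∑ i, star (ξ i) * ψ t i‖ ^ 2 : ℝ) : ℂ)
      = ∑ j, ∑ k, (b j * star (b k)) *
          Complex.exp ((Complex.I * ((θ k : ℂ) - (θ j : ℂ))) * t) := by
    intro t
    have hz : ∀ z : ℂ, ((‖z‖ ^ 2 : ℝ) : ℂ) = z * star z := by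
      intro z
      rw [show (star z) = (starRingEnd ℂ) z from rfl, Complex.mul_conj]
      push_cast [Complex.normSq_eq_norm_sq]
      ring_nf
    rw [hf t, hz]
    have hstar : star (∑ k, b k * Complex.exp (-(Complex.I * t) * θ k))
        = ∑ k, star (b k) * Complex.exp (Complex.I * t * θ k) := by
      rw [star_sum]
      refine Finset.sum_congr rfl fun k _ => ?_
      rw [star_mul', show ∀ z : ℂ, star (Complex.exp z) = Complex.exp (star z) from
        fun z => (Complex.exp_conj z).symm]
      congr 1
      simp [Complex.ext_iff]
    rw [hstar, Finset.sum_mul_sum]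
    refine Finset.sum_congr rfl fun j _ => Finset.sum_congr rfl fun k _ => ?_
    rw [mul_mul_mul_comm, ← Complex.exp_add]
    congr 1
    ring
  set E : Fin N → Fin N → ℝ → ℂ := fun j k T =>
    ∫ t in (0:ℝ)..T, Complex.exp ((Complex.I * ((θ k : ℂ) - (θ j : ℂ))) * t) with hE
  have hcont : ∀ j k : Fin N,
      Continuous (fun t : ℝ => Complex.exp ((Complex.I * ((θ k : ℂ) - (θ j : ℂ))) * t)) :=
    fun j k => Complex.continuous_exp.comp (continuous_const.mul Complex.continuous_ofReal)
  -- integral identity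
  have hInt : ∀ T : ℝ, ((∫ t in (0:ℝ)..T, ‖∑ i, star (ξ i) * ψ t i‖ ^ 2 : ℝ) : ℂ)
      = ∑ j, ∑ k, (b j * star (b k)) * E j k T := by
    intro T
    rw [← intervalIntegral.integral_ofReal]
    rw [show (fun t : ℝ => ((‖∑ i, star (ξ i) * ψ t i‖ ^ 2 : ℝ) : ℂ))
        = fun t : ℝ => ∑ j, ∑ k, (b j * star (b k)) *
            Complex.exp ((Complex.I * ((θ k : ℂ) - (θ j : ℂ))) * t) from funext hpt]
    rw [intervalIntegral.integral_finset_sum]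
    · refine Finset.sum_congr rfl fun j _ => ?_
      rw [intervalIntegral.integral_finset_sum]
      · exact Finset.sum_congr rfl fun k _ => intervalIntegral.integral_const_mul _ _
      · exact fun k _ => ((continuous_const.mul (hcont j k)).intervalIntegrable _ _)
    · intro j _
      exact (continuous_finset_sum _ fun k _ =>
        continuous_const.mul (hcont j k)).intervalIntegrable _ _
  -- rewrite the function whose limit we take
  have hfun : (fun T : ℝ =>
        (((1 / T) * ∫ t in (0:ℝ)..T, ‖∑ i, star (ξ i) * ψ t i‖ ^ 2 : ℝ) : ℂ))
      = fun T : ℝ => ∑ j, ∑ k, (1 / (T : ℂ)) * ((b j * star (b k)) * E j k T) := by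
    funext T
    rw [Complex.ofReal_mul, hInt T, Finset.mul_sum]
    refine Finset.sum_congr rfl fun j _ => ?_
    rw [Finset.mul_sum]
    refine Finset.sum_congr rfl fun k _ => ?_
    push_cast
    ring
  rw [hfun]
  -- rewrite the limit
  have htarget : (∑ j, ∑ k,
        if θ j = θ k then
          a j * star (a k) * (∑ i, star (ξ i) * φ j i) * (∑ i, star (φ k i) * ξ i)
        else 0)
      = ∑ j, ∑ k, if θ j = θ k then b j * star (b k) else 0 := by
    refine Finset.sum_congr rfl fun j _ => Finset.sum_congr rfl fun k _ => ?_
    by_cases h : θ j = θ k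
    · simp only [if_pos h]
      have hd : (∑ i, star (φ k i) * ξ i) = star (c k) := by
        simp only [hc, star_sum, star_mul', star_star]
        exact Finset.sum_congr rfl fun i _ => mul_comm _ _
      rw [hd, show (∑ i, star (ξ i) * φ j i) = c j from rfl]
      simp only [hb, star_mul']
      ring
    · simp [h]
  rw [htarget]
  -- termwise limits
  refine tendsto_finset_sum _ fun j _ => tendsto_finset_sum _ fun k _ => ?_
  by_cases hθ : θ j = θ k
  · simp only [if_pos hθ]
    have hE0 : ∀ T : ℝ, E j k T = (T : ℂ) := by
      intro T
      simp [hE, hθ]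
    refine Filter.Tendsto.congr' ?_ tendsto_const_nhds
    filter_upwards [Filter.eventually_ge_atTop 1] with T hT
    have hT0 : (T : ℂ) ≠ 0 := by
      exact_mod_cast (by linarith : T ≠ 0)
    rw [hE0]
    field_simp
  · simp only [if_neg hθ]
    set w : ℂ := Complex.I * ((θ k : ℂ) - (θ j : ℂ)) with hw
    have hδ : w ≠ 0 := by
      refine mul_ne_zero Complex.I_ne_zero (sub_ne_zero.mpr ?_)
      exact fun h => hθ (Complex.ofReal_inj.mp h).symm
    have hEeq : ∀ T : ℝ, E j k T = (Complex.exp (w * T) - 1) / w := by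
      intro T
      rw [hE]
      show ∫ t in (0:ℝ)..T, Complex.exp (w * t) = _
      rw [integral_exp_mul_complex hδ]
      simp
    have hnorm1 : ∀ T : ℝ, ‖Complex.exp (w * T)‖ = 1 := by
      intro T
      rw [Complex.norm_exp]
      have : (w * (T : ℂ)).re = 0 := by
        simp [hw, Complex.mul_re, Complex.mul_im]
      rw [this, Real.exp_zero]
    have hEbdd : ∀ T : ℝ, ‖E j k T‖ ≤ 2 / ‖w‖ := by
      intro T
      rw [hEeq T, norm_div]
      gcongr
      calc ‖Complex.exp (w * T) - 1‖ ≤ ‖Complex.exp (w * T)‖ + ‖(1:ℂ)‖ := norm_sub_le _ _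
        _ = 2 := by rw [hnorm1 T]; norm_num
    rw [tendsto_zero_iff_norm_tendsto_zero]
    have hC : Filter.Tendsto
        (fun T : ℝ => (‖b j * star (b k)‖ * (2 / ‖w‖)) * T⁻¹) Filter.atTop (nhds 0) := by
      simpa using tendsto_inv_atTop_zero.const_mul (‖b j * star (b k)‖ * (2 / ‖w‖))
    refine squeeze_zero' (Filter.Eventually.of_forall fun T => norm_nonneg _) ?_ hC
    filter_upwards [Filter.eventually_ge_atTop 1] with T hT
    have hT1 : (0:ℝ) < T := lt_of_lt_of_le one_pos hT
    have h1T : ‖(1 / (T:ℂ))‖ = T⁻¹ := by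
      simp [abs_of_pos hT1]
    calc ‖1 / (T:ℂ) * (b j * star (b k) * E j k T)‖
        = T⁻¹ * (‖b j * star (b k)‖ * ‖E j k T‖) := by
          rw [norm_mul, norm_mul, h1T]
      _ ≤ T⁻¹ * (‖b j * star (b k)‖ * (2 / ‖w‖)) := by
          gcongr
          exact hEbdd T
      _ = (‖b j * star (b k)‖ * (2 / ‖w‖)) * T⁻¹ := by ring
end

section
/- Let H be an N×N Hermitian complex matrix with orthonormal eigenvectors φ_1,…,φ_N and corresponding real eigenvalues θ_1,…,θ_N that are pairwise distinct, let ψ(0) = Σ_{i=1}^N a_i φ_i, and let ψ(t) = exp(−itH)ψ(0). Then for every standard basis vector e_j of ℂ^N, the limit as T → ∞ of (1/T)∫_0^T |⟨e_j, ψ(t)⟩|² dt equals Σ_{i=1}^N |a_i|² |⟨e_j, φ_i⟩|². -/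
set_option maxHeartbeats 1000000

open scoped BigOperators


noncomputable def mulVecL {N : ℕ} (v : Fin N → ℂ) :
    Matrix (Fin N) (Fin N) ℂ →L[ℂ] (Fin N → ℂ) :=
  LinearMap.toContinuousLinearMap
    { toFun := fun B => B.mulVec v
      map_add' := fun A B => Matrix.add_mulVec A B v
      map_smul' := fun c A => Matrix.smul_mulVec c A v }

lemma pow_mulVec {N : ℕ} (A : Matrix (Fin N) (Fin N) ℂ) (v : Fin N → ℂ) (c : ℂ)
    (h : A.mulVec v = c • v) (n : ℕ) : (A ^ n).mulVec v = c ^ n • v := by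
  induction n with
  | zero => simp [Matrix.one_mulVec]
  | succ n ih =>
    rw [pow_succ, ← Matrix.mulVec_mulVec, h, Matrix.mulVec_smul, ih, smul_smul, pow_succ,
      mul_comm]

lemma exp_mulVec {N : ℕ} (A : Matrix (Fin N) (Fin N) ℂ) (v : Fin N → ℂ) (c : ℂ)
    (h : A.mulVec v = c • v) :
    (NormedSpace.exp A).mulVec v = NormedSpace.exp c • v := by
  letI : SeminormedRing (Matrix (Fin N) (Fin N) ℂ) := Matrix.linftyOpSemiNormedRing
  letI : NormedRing (Matrix (Fin N) (Fin N) ℂ) := Matrix.linftyOpNormedRing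
  letI : NormedAlgebra ℂ (Matrix (Fin N) (Fin N) ℂ) := Matrix.linftyOpNormedAlgebra
  have h1 : (NormedSpace.exp A).mulVec v = mulVecL v (NormedSpace.exp A) := rfl
  have hs := NormedSpace.expSeries_summable' (𝕂 := ℂ) A
  rw [h1, NormedSpace.exp_eq_tsum (𝕂 := ℂ)]
  beta_reduce
  erw [← (hs.hasSum.mapL (mulVecL v)).tsum_eq]
  have h2 : ∀ n : ℕ, mulVecL v (((Nat.factorial n : ℂ))⁻¹ • A ^ n) = (((Nat.factorial n : ℂ))⁻¹ * c ^ n) • v := by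
    intro n
    rw [map_smul]
    show ((Nat.factorial n : ℂ))⁻¹ • (A ^ n).mulVec v = _
    rw [pow_mulVec A v c h n, smul_smul]
  have hc : Summable fun n : ℕ => ((Nat.factorial n : ℂ))⁻¹ * c ^ n := by
    simpa [smul_eq_mul] using NormedSpace.expSeries_summable' (𝕂 := ℂ) c
  rw [tsum_congr h2, hc.tsum_smul_const, NormedSpace.exp_eq_tsum (𝕂 := ℂ)]
  simp [smul_eq_mul]

open Filter in
lemma cesaro {N : ℕ} (c : Fin N → ℂ) (θ : Fin N → ℝ) (hdist : Function.Injective θ) :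
    Filter.Tendsto
      (fun T : ℝ => (1 / T) * ∫ t in (0:ℝ)..T,
        ‖∑ i, c i * Complex.exp (-(Complex.I * t) * (θ i : ℂ))‖ ^ 2)
      Filter.atTop (nhds (∑ i, ‖c i‖ ^ 2)) := by
  classical
  set g : Fin N → Fin N → ℝ → ℝ := fun i k t =>
    ((starRingEnd ℂ) (c i) * c k *
      Complex.exp ((Complex.I * ((θ i : ℂ) - (θ k : ℂ))) * (t : ℂ))).re with hg
  have hexpand : ∀ t : ℝ,
      ‖∑ i, c i * Complex.exp (-(Complex.I * t) * (θ i : ℂ))‖ ^ 2 = ∑ i, ∑ k, g i k t := by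
    intro t
    have hterm : ∀ i k : Fin N,
        (starRingEnd ℂ) (c i * Complex.exp (-(Complex.I * t) * (θ i : ℂ))) *
          (c k * Complex.exp (-(Complex.I * t) * (θ k : ℂ))) =
        (starRingEnd ℂ) (c i) * c k *
          Complex.exp ((Complex.I * ((θ i : ℂ) - (θ k : ℂ))) * (t : ℂ)) := by
      intro i k
      rw [map_mul, ← Complex.exp_conj]
      have hconj : (starRingEnd ℂ) (-(Complex.I * t) * (θ i : ℂ)) =
          Complex.I * t * (θ i : ℂ) := by
        simp [map_mul, map_neg, Complex.conj_ofReal]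
      rw [hconj, mul_mul_mul_comm, ← Complex.exp_add]
      congr 1
      ring
    set z := ∑ i, c i * Complex.exp (-(Complex.I * t) * (θ i : ℂ)) with hz
    have h1 : ‖z‖ ^ 2 = ((starRingEnd ℂ) z * z).re := by
      rw [Complex.sq_norm, ← Complex.normSq_eq_conj_mul_self,
        Complex.ofReal_re]
    rw [h1, hz, map_sum, Finset.sum_mul_sum, Complex.re_sum]
    refine Finset.sum_congr rfl fun i _ => ?_
    rw [Complex.re_sum]
    exact Finset.sum_congr rfl fun k _ => congrArg Complex.re (hterm i k)
  have hcont : ∀ i k, Continuous (g i k) := by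
    intro i k
    exact Complex.continuous_re.comp
      (continuous_const.mul (Complex.continuous_exp.comp
        (continuous_const.mul Complex.continuous_ofReal)))
  have hint : ∀ (i k) (T : ℝ), IntervalIntegrable (g i k) MeasureTheory.volume 0 T :=
    fun i k T => (hcont i k).intervalIntegrable 0 T
  have key : ∀ T : ℝ,
      (1 / T) * ∫ t in (0:ℝ)..T,
        ‖∑ i, c i * Complex.exp (-(Complex.I * t) * (θ i : ℂ))‖ ^ 2 =
      ∑ i, ∑ k, (1 / T) * ∫ t in (0:ℝ)..T, g i k t := by
    intro T
    have h2 : (∫ t in (0:ℝ)..T,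
        ‖∑ i, c i * Complex.exp (-(Complex.I * t) * (θ i : ℂ))‖ ^ 2) =
        ∑ i, ∑ k, ∫ t in (0:ℝ)..T, g i k t := by
      rw [intervalIntegral.integral_congr (g := fun t => ∑ i, ∑ k, g i k t)
        (fun t _ => hexpand t)]
      rw [intervalIntegral.integral_finset_sum (fun i _ =>
        ((continuous_finset_sum _ fun k _ => hcont i k).intervalIntegrable 0 T))]
      exact Finset.sum_congr rfl fun i _ =>
        intervalIntegral.integral_finset_sum fun k _ => hint i k T
    rw [h2, Finset.mul_sum]
    exact Finset.sum_congr rfl fun i _ => Finset.mul_sum _ _ _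
  have hlim : ∀ i k, Filter.Tendsto (fun T : ℝ => (1 / T) * ∫ t in (0:ℝ)..T, g i k t)
      Filter.atTop (nhds (if i = k then ‖c i‖ ^ 2 else 0)) := by
    intro i k
    by_cases hik : i = k
    · subst hik
      simp only [if_pos rfl]
      have hgii : g i i = fun _ => ‖c i‖ ^ 2 := by
        funext t
        simp [hg, ← Complex.normSq_eq_conj_mul_self,
          Complex.sq_norm, Complex.normSq_apply]
      rw [hgii]
      have : (fun T : ℝ => (1 / T) * ∫ _ in (0:ℝ)..T, ‖c i‖ ^ 2) =ᶠ[Filter.atTop]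
          fun _ => ‖c i‖ ^ 2 := by
        filter_upwards [eventually_gt_atTop (0:ℝ)] with T hT
        rw [intervalIntegral.integral_const, smul_eq_mul, sub_zero]
        field_simp
      exact Filter.Tendsto.congr' this.symm tendsto_const_nhds
    · simp only [if_neg hik]
      set w : ℂ := Complex.I * ((θ i : ℂ) - (θ k : ℂ)) with hwdef
      have hw : w ≠ 0 := by
        apply mul_ne_zero Complex.I_ne_zero
        rw [sub_ne_zero]
        exact_mod_cast fun h => hik (hdist (by exact_mod_cast h))
      set d : ℂ := (starRingEnd ℂ) (c i) * c k with hd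
      have hival : ∀ T : ℝ, (∫ t in (0:ℝ)..T, g i k t) =
          (d * ((Complex.exp (w * T) - Complex.exp (w * (0:ℝ))) / w)).re := by
        intro T
        have hcc : Continuous fun t : ℝ => d * Complex.exp (w * t) :=
          continuous_const.mul (Complex.continuous_exp.comp
            (continuous_const.mul Complex.continuous_ofReal))
        have h3 : (∫ t in (0:ℝ)..T, g i k t) =
            Complex.reCLM (∫ t in (0:ℝ)..T, d * Complex.exp (w * t)) := by
          rw [← Complex.reCLM.intervalIntegral_comp_comm (hcc.intervalIntegrable 0 T)]
          rfl
        rw [h3, intervalIntegral.integral_const_mul, integral_exp_mul_complex hw]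
        simp [mul_div_assoc]
      have hbound : ∀ᶠ T : ℝ in Filter.atTop,
          ‖(1 / T) * ∫ t in (0:ℝ)..T, g i k t‖ ≤ (‖d‖ * (2 / ‖w‖)) * (1 / T) := by
        filter_upwards [eventually_gt_atTop (0:ℝ)] with T hT
        have hre1 : ∀ s : ℝ, ‖Complex.exp (w * s)‖ = 1 := by
          intro s
          rw [Complex.norm_exp]
          have hre0 : (w * (s : ℂ)).re = 0 := by
            simp [hwdef, Complex.mul_re]
          rw [hre0, Real.exp_zero]
        have h1T : ‖(1:ℝ)/T‖ = 1/T := abs_of_pos (by positivity)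
        rw [hival T, norm_mul, h1T, mul_comm (‖d‖ * (2 / ‖w‖)) (1 / T)]
        apply mul_le_mul_of_nonneg_left _ (by positivity)
        calc ‖(d * ((Complex.exp (w * T) - Complex.exp (w * (0:ℝ))) / w)).re‖
            ≤ ‖d * ((Complex.exp (w * T) - Complex.exp (w * (0:ℝ))) / w)‖ :=
              Complex.abs_re_le_norm _
          _ = ‖d‖ * (‖Complex.exp (w * T) - Complex.exp (w * (0:ℝ))‖ / ‖w‖) := by
              rw [norm_mul, norm_div]
          _ ≤ ‖d‖ * (2 / ‖w‖) := by
              apply mul_le_mul_of_nonneg_left _ (norm_nonneg d)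
              have hwpos : 0 < ‖w‖ := norm_pos_iff.mpr hw
              apply (div_le_div_iff_of_pos_right hwpos).mpr
              calc ‖Complex.exp (w * (T:ℂ)) - Complex.exp (w * ((0:ℝ):ℂ))‖
                  ≤ ‖Complex.exp (w * (T:ℂ))‖ + ‖Complex.exp (w * ((0:ℝ):ℂ))‖ :=
                    norm_sub_le _ _
                _ = 2 := by rw [hre1, hre1]; norm_num
      have hcz : Filter.Tendsto (fun T : ℝ => (‖d‖ * (2 / ‖w‖)) * (1 / T))
          Filter.atTop (nhds 0) := by
        have h0 := tendsto_inv_atTop_zero (𝕜 := ℝ)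
        simpa [one_div] using h0.const_mul (‖d‖ * (2 / ‖w‖))
      exact squeeze_zero_norm' hbound hcz
  have hsum := tendsto_finset_sum Finset.univ
    (fun i (_ : i ∈ Finset.univ) => tendsto_finset_sum Finset.univ
      (fun k (_ : k ∈ Finset.univ) => hlim i k))
  have hfin : (∑ i : Fin N, ∑ k : Fin N, if i = k then ‖c i‖ ^ 2 else (0:ℝ)) =
      ∑ i, ‖c i‖ ^ 2 := by
    simp
  rw [← hfin]
  exact Filter.Tendsto.congr (fun T => (key T).symm) hsum

/-- If the eigenvalues of the Hermitian Hamiltonian `H` are pairwise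
distinct, then for every standard basis vector `e j` the Cesàro time average of the
occupation converges to `∑ i, |a i|² * |⟨e j, φ i⟩|²`. -/
theorem stmt_2 (N : ℕ) (H : Matrix (Fin N) (Fin N) ℂ) (hH : H.IsHermitian)
    (φ : Fin N → (Fin N → ℂ)) (θ : Fin N → ℝ)
    (horth : ∀ j k : Fin N, (∑ i, star (φ j i) * φ k i) = if j = k then 1 else 0)
    (heig : ∀ j : Fin N, H.mulVec (φ j) = (θ j : ℂ) • φ j)
    (hdist : Function.Injective θ)
    (a : Fin N → ℂ) (ψ : ℝ → (Fin N → ℂ))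
    (hψ : ∀ t : ℝ,
      ψ t = (NormedSpace.exp ((-(Complex.I * t)) • H)).mulVec (∑ i, a i • φ i))
    (j : Fin N) :
    Filter.Tendsto
      (fun T : ℝ =>
        (1 / T) * ∫ t in (0:ℝ)..T, ‖∑ m, star ((Pi.single j 1 : Fin N → ℂ) m) * ψ t m‖ ^ 2)
      Filter.atTop
      (nhds (∑ i, ‖a i‖ ^ 2 * ‖∑ m, star ((Pi.single j 1 : Fin N → ℂ) m) * φ i m‖ ^ 2)) := by
  classical
  have hsingle : ∀ v : Fin N → ℂ,
      (∑ m, star ((Pi.single j 1 : Fin N → ℂ) m) * v m) = v j := by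
    intro v
    rw [Finset.sum_eq_single j]
    · simp
    · intro b _ hb
      simp [Pi.single_apply, hb]
    · simp
  set c : Fin N → ℂ := fun i => a i * φ i j with hc
  have hψj : ∀ t : ℝ, ψ t j = ∑ i, c i * Complex.exp (-(Complex.I * t) * (θ i : ℂ)) := by
    intro t
    have heigt : ∀ i : Fin N, ((-(Complex.I * t)) • H).mulVec (φ i)
        = ((-(Complex.I * t)) * θ i) • φ i := by
      intro i
      rw [Matrix.smul_mulVec, heig i, smul_smul]
    have hexpvec : ∀ i : Fin N,
        (NormedSpace.exp ((-(Complex.I * t)) • H)).mulVec (φ i)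
          = Complex.exp ((-(Complex.I * t)) * θ i) • φ i := by
      intro i
      rw [exp_mulVec _ _ _ (heigt i), Complex.exp_eq_exp_ℂ]
    have hsum : ψ t = ∑ i, a i • ((NormedSpace.exp ((-(Complex.I * t)) • H)).mulVec (φ i)) := by
      rw [hψ t, ← Matrix.mulVecLin_apply, map_sum]
      simp [Matrix.mulVecLin_apply, Matrix.mulVec_smul]
    rw [hsum]
    simp only [hexpvec, Finset.sum_apply, Pi.smul_apply, smul_eq_mul]
    exact Finset.sum_congr rfl fun i _ => by ring
  have hfun : (fun T : ℝ =>
      (1 / T) * ∫ t in (0:ℝ)..T, ‖∑ m, star ((Pi.single j 1 : Fin N → ℂ) m) * ψ t m‖ ^ 2)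
      = fun T : ℝ => (1 / T) * ∫ t in (0:ℝ)..T,
        ‖∑ i, c i * Complex.exp (-(Complex.I * t) * (θ i : ℂ))‖ ^ 2 := by
    funext T
    congr 1
    apply intervalIntegral.integral_congr
    intro t _
    show ‖∑ m, star ((Pi.single j 1 : Fin N → ℂ) m) * ψ t m‖ ^ 2 = _
    rw [hsingle (ψ t), hψj t]
  have hval : (∑ i, ‖a i‖ ^ 2 * ‖∑ m, star ((Pi.single j 1 : Fin N → ℂ) m) * φ i m‖ ^ 2)
      = ∑ i, ‖c i‖ ^ 2 := by
    refine Finset.sum_congr rfl fun i _ => ?_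
    rw [hsingle (φ i), hc]
    simp [norm_mul, mul_pow]
  rw [hfun, hval]
  exact cesaro c θ hdist
end

section
/- Let A be an n×n real matrix and let 𝒜 be the 2n×2n block matrix [[0, A],[Aᵀ, 0]]. Then for every i with 1 ≤ i ≤ n, the i-th diagonal entry of the matrix exponential satisfies [e^{𝒜}]_{i,i} = Σ_{k=0}^{∞} [(AAᵀ)^k]_{i,i}/(2k)!, and the (n+i)-th diagonal entry satisfies [e^{𝒜}]_{n+i,n+i} = Σ_{k=0}^{∞} [(AᵀA)^k]_{i,i}/(2k)!. -/
open Matrix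
open scoped BigOperators

lemma pow_even_fromBlocks {n : ℕ} (A : Matrix (Fin n) (Fin n) ℝ) (k : ℕ) :
    (Matrix.fromBlocks (0 : Matrix (Fin n) (Fin n) ℝ) A Aᵀ 0) ^ (2 * k) =
      Matrix.fromBlocks ((A * Aᵀ) ^ k) 0 0 ((Aᵀ * A) ^ k) := by
  induction k with
  | zero => simp [Matrix.fromBlocks_one]
  | succ k ih =>
    have h2 : 2 * (k + 1) = 2 * k + 1 + 1 := by ring
    rw [h2, pow_succ, pow_succ, ih, Matrix.fromBlocks_multiply, Matrix.fromBlocks_multiply]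
    simp [pow_succ, Matrix.mul_assoc]

/-- For an `n×n` real matrix `A` and the `2n×2n` block matrix
`𝒜 = [[0, A], [Aᵀ, 0]]`, for every `i` the diagonal entries of the matrix exponential
satisfy `[e^𝒜]_{i,i} = ∑_{k=0}^∞ [(AAᵀ)^k]_{i,i} / (2k)!` and
`[e^𝒜]_{n+i,n+i} = ∑_{k=0}^∞ [(AᵀA)^k]_{i,i} / (2k)!`. -/
theorem stmt_12 (n : ℕ) (A : Matrix (Fin n) (Fin n) ℝ) (i : Fin n) :
    NormedSpace.exp (Matrix.fromBlocks (0 : Matrix (Fin n) (Fin n) ℝ) A Aᵀ 0)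
        (Sum.inl i) (Sum.inl i) =
      (∑' k : ℕ, ((A * Aᵀ) ^ k) i i / ((2 * k).factorial : ℝ)) ∧
    NormedSpace.exp (Matrix.fromBlocks (0 : Matrix (Fin n) (Fin n) ℝ) A Aᵀ 0)
        (Sum.inr i) (Sum.inr i) =
      (∑' k : ℕ, ((Aᵀ * A) ^ k) i i / ((2 * k).factorial : ℝ)) := by
  letI : SeminormedRing (Matrix (Fin n ⊕ Fin n) (Fin n ⊕ Fin n) ℝ) :=
    Matrix.linftyOpSemiNormedRing
  letI : NormedRing (Matrix (Fin n ⊕ Fin n) (Fin n ⊕ Fin n) ℝ) := Matrix.linftyOpNormedRing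
  letI : NormedAlgebra ℝ (Matrix (Fin n ⊕ Fin n) (Fin n ⊕ Fin n) ℝ) :=
    Matrix.linftyOpNormedAlgebra
  set 𝒜 : Matrix (Fin n ⊕ Fin n) (Fin n ⊕ Fin n) ℝ :=
    Matrix.fromBlocks (0 : Matrix (Fin n) (Fin n) ℝ) A Aᵀ 0 with h𝒜
  have hsum : Summable fun m : ℕ => ((m.factorial : ℝ))⁻¹ • 𝒜 ^ m :=
    NormedSpace.expSeries_summable' 𝒜
  have key : ∀ p : Fin n ⊕ Fin n,
      NormedSpace.exp 𝒜 p p = ∑' m : ℕ, ((m.factorial : ℝ))⁻¹ * (𝒜 ^ m) p p := by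
    intro p
    simp only [NormedSpace.exp_eq_tsum ℝ]
    erw [tsum_apply hsum, tsum_apply (Pi.summable.mp hsum p)]
    simp [Matrix.smul_apply]
  -- summability of the entrywise series
  have hent : ∀ p : Fin n ⊕ Fin n,
      Summable fun m : ℕ => ((m.factorial : ℝ))⁻¹ * (𝒜 ^ m) p p := by
    intro p
    have := Pi.summable.mp (Pi.summable.mp hsum p) p
    simpa [Matrix.smul_apply] using this
  have hinj2 : Function.Injective fun k : ℕ => 2 * k := fun a b h => by simp only at h; omega
  have hinj2' : Function.Injective fun k : ℕ => 2 * k + 1 := fun a b h => by simp only at h; omega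
  have hodd : ∀ (k : ℕ) (p : Fin n ⊕ Fin n), (𝒜 ^ (2 * k + 1)) p p = 0 := by
    intro k p
    rw [pow_succ, pow_even_fromBlocks, h𝒜, Matrix.fromBlocks_multiply]
    cases p <;> simp
  have main : ∀ p : Fin n ⊕ Fin n,
      NormedSpace.exp 𝒜 p p =
        ∑' k : ℕ, (((2 * k).factorial : ℝ))⁻¹ * (𝒜 ^ (2 * k)) p p := by
    intro p
    rw [key p]
    set g : ℕ → ℝ := fun m => ((m.factorial : ℝ))⁻¹ * (𝒜 ^ m) p p with hg
    have he : Summable fun k => g (2 * k) := (hent p).comp_injective hinj2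
    have ho : HasSum (fun k => g (2 * k + 1)) 0 := by
      have : (fun k => g (2 * k + 1)) = fun _ => (0 : ℝ) := by
        funext k; simp [hg, hodd k p]
      rw [this]; exact hasSum_zero
    have := (he.hasSum.even_add_odd ho).tsum_eq
    rw [this, add_zero]
  constructor
  · rw [main (Sum.inl i)]
    congr 1; funext k
    rw [pow_even_fromBlocks, Matrix.fromBlocks_apply₁₁, div_eq_inv_mul]
  · rw [main (Sum.inr i)]
    congr 1; funext k
    rw [pow_even_fromBlocks, Matrix.fromBlocks_apply₂₂, div_eq_inv_mul]
end
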